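/- Assume exactness, and let the SHB iterates be started from x0, x1 ∈ ℝ^d with x0 − x1 ∈ Range(Aᵀ), with stepsize 0 < ω ≤ 1/λmax and momentum parameter β satisfying (1 − sqrt(ω λmin⁺))² < β < 1. Let x* be the orthogonal projection of x0 onto {x : A x = b}. Then there exists a constant C > 0 such that for all k ≥ 0, ‖E[x_k − x*]‖² ≤ β^k C. -/

import Mathlib

open Matrix MeasureTheory ProbabilityTheory

/-- Matrices over measurable entries carry the product σ-algebra. -/
local instance {m n : ℕ} : MeasurableSpace (Matrix (Fin m) (Fin n) ℝ) :=
  MeasurableSpace.pi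

namespace SHBaux

lemma dot_self_nonneg {d : ℕ} (v : Fin d → ℝ) : 0 ≤ v ⬝ᵥ v :=
  Finset.sum_nonneg fun _ _ => mul_self_nonneg _

lemma symdot {d : ℕ} {M : Matrix (Fin d) (Fin d) ℝ} (hM : Mᵀ = M) (u v : Fin d → ℝ) :
    u ⬝ᵥ (M *ᵥ v) = v ⬝ᵥ (M *ᵥ u) := by
  rw [Matrix.dotProduct_mulVec, ← Matrix.mulVec_transpose, hM, dotProduct_comm]

lemma entry_abs_le_one {d : ℕ} {P : Matrix (Fin d) (Fin d) ℝ}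
    (hsym : Pᵀ = P) (hidem : P * P = P) (i j : Fin d) : |P i j| ≤ 1 := by
  have hrow : ∀ a b : Fin d, P a b = ∑ c, P a c * P b c := by
    intro a b
    conv_lhs => rw [← hidem]
    rw [Matrix.mul_apply]
    refine Finset.sum_congr rfl fun c _ => ?_
    have hc : P c b = P b c := by
      conv_lhs => rw [← hsym]
      rfl
    rw [hc]
  have hdiag : ∀ a, P a a = ∑ c, (P a c) ^ 2 := by
    intro a; rw [hrow a a]; simp [sq]
  have hdiag0 : ∀ a, 0 ≤ P a a := by
    intro a; rw [hdiag a]; exact Finset.sum_nonneg fun c _ => by positivity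
  have hdiag1 : ∀ a, P a a ≤ 1 := by
    intro a
    have h1 : (P a a) ^ 2 ≤ P a a := by
      conv_rhs => rw [hdiag a]
      exact Finset.single_le_sum (f := fun c => P a c ^ 2) (fun c _ => sq_nonneg _)
        (Finset.mem_univ a)
    nlinarith [hdiag0 a]
  have hsq : (P i j) ^ 2 ≤ P i i * P j j := by
    rw [hrow i j, hdiag i, hdiag j]
    exact Finset.sum_mul_sq_le_sq_mul_sq Finset.univ _ _
  have h1 : (P i j) ^ 2 ≤ 1 :=
    le_trans hsq (by nlinarith [hdiag0 i, hdiag0 j, hdiag1 i, hdiag1 j])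
  refine abs_le.mpr ⟨by nlinarith, by nlinarith⟩

lemma eq_zero_of_forall_scale {c n : ℝ} (hn : 0 ≤ n) (h : ∀ t : ℝ, 2 * t * c ≤ t ^ 2 * n) :
    c = 0 := by
  have hp : (0 : ℝ) < n + 1 := by linarith
  have h1 := h (c / (n + 1))
  have h2 : c ^ 2 ≤ 0 := by
    have h3 : 2 * (c / (n + 1)) * c * (n + 1) ^ 2 ≤ (c / (n + 1)) ^ 2 * n * (n + 1) ^ 2 := by
      nlinarith [sq_nonneg (n + 1)]
    have e1 : 2 * (c / (n + 1)) * c * (n + 1) ^ 2 = 2 * c ^ 2 * (n + 1) := by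
      field_simp
    have e2 : (c / (n + 1)) ^ 2 * n * (n + 1) ^ 2 = c ^ 2 * n := by
      field_simp
    rw [e1, e2] at h3
    nlinarith
  have : c ^ 2 = 0 := le_antisymm h2 (sq_nonneg c)
  exact pow_eq_zero_iff (by norm_num) |>.mp this

lemma mem_range_transpose {m d : ℕ} (A : Matrix (Fin m) (Fin d) ℝ) (v : Fin d → ℝ)
    (h : ∀ z : Fin d → ℝ, A *ᵥ z = 0 → v ⬝ᵥ z = 0) : ∃ u, v = Aᵀ *ᵥ u := by
  classical
  set Rg := LinearMap.range (Matrix.mulVecLin Aᵀ) with hRg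
  set K := LinearMap.ker (Matrix.mulVecLin A) with hK
  have hdot : ∀ (u : Fin m → ℝ) (z : Fin d → ℝ), A *ᵥ z = 0 → (Aᵀ *ᵥ u) ⬝ᵥ z = 0 := by
    intro u z hz
    rw [dotProduct_comm, Matrix.dotProduct_mulVec, Matrix.vecMul_transpose, hz,
      zero_dotProduct]
  have hdisj : Disjoint Rg K := by
    rw [Submodule.disjoint_def]
    rintro w ⟨u, rfl⟩ hw2
    have hAw : A *ᵥ (Aᵀ *ᵥ u) = 0 := hw2
    have h0 : (Aᵀ *ᵥ u) ⬝ᵥ (Aᵀ *ᵥ u) = 0 := hdot u _ hAw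
    have h0' : Aᵀ *ᵥ u = 0 := dotProduct_self_eq_zero.mp h0
    exact h0'
  have hdim : Module.finrank ℝ Rg + Module.finrank ℝ K = Module.finrank ℝ (Fin d → ℝ) := by
    have h1 : Module.finrank ℝ Rg = Aᵀ.rank := rfl
    have h2 : Aᵀ.rank = A.rank := Matrix.rank_transpose A
    have h3 : A.rank = Module.finrank ℝ (LinearMap.range A.mulVecLin) := rfl
    rw [h1, h2, h3, ← LinearMap.finrank_range_add_finrank_ker A.mulVecLin]
  have htop : Rg ⊔ K = ⊤ := Submodule.eq_top_of_disjoint Rg K hdim.ge hdisj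
  have hv : v ∈ Rg ⊔ K := htop ▸ Submodule.mem_top
  obtain ⟨p, hp, z, hz, hpz⟩ := Submodule.mem_sup.mp hv
  obtain ⟨u, hu⟩ := hp
  have hz0 : A *ᵥ z = 0 := hz
  have h1 : v ⬝ᵥ z = 0 := h z hz0
  have hu' : p = Aᵀ *ᵥ u := hu.symm
  have h2 : p ⬝ᵥ z = 0 := by rw [hu']; exact hdot u z hz0
  have h3 : z ⬝ᵥ z = 0 := by
    have hexp : (p + z) ⬝ᵥ z = p ⬝ᵥ z + z ⬝ᵥ z := add_dotProduct _ _ _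
    rw [← hpz] at h1
    linarith
  have hz' : z = 0 := dotProduct_self_eq_zero.mp h3
  refine ⟨u, ?_⟩
  rw [← hpz, hz', add_zero]
  exact hu'

lemma seq_decay {d : ℕ} (M : Matrix (Fin d) (Fin d) ℝ) (hMsym : Mᵀ = M)
    (R : Submodule ℝ (Fin d → ℝ)) (β c : ℝ) (hβ : 0 < β) (hc0 : 0 ≤ c)
    (hc : c < 2 * Real.sqrt β)
    (hQ0 : ∀ v ∈ R, 0 ≤ v ⬝ᵥ (M *ᵥ v)) (hQc : ∀ v ∈ R, v ⬝ᵥ (M *ᵥ v) ≤ c * (v ⬝ᵥ v))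
    (r : ℕ → (Fin d → ℝ)) (hmem : ∀ k, r k ∈ R)
    (hrec : ∀ k, r (k + 2) = M *ᵥ r (k + 1) - β • r k) :
    ∃ C : ℝ, 0 < C ∧ ∀ k, r k ⬝ᵥ r k ≤ β ^ k * C := by
  have hs0 : 0 < Real.sqrt β := Real.sqrt_pos.mpr hβ
  set s : ℝ := Real.sqrt β with hsdef
  have hs2 : s ^ 2 = β := Real.sq_sqrt hβ.le
  have hcross : ∀ u ∈ R, ∀ v ∈ R,
      2 * s * (u ⬝ᵥ (M *ᵥ v)) ≤ c * (u ⬝ᵥ u) + c * s ^ 2 * (v ⬝ᵥ v) := by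
    intro u hu v hv
    have ha := hQc (u + s • v) (R.add_mem hu (R.smul_mem s hv))
    have hb := hQ0 (u - s • v) (R.sub_mem hu (R.smul_mem s hv))
    have e1 : (u + s • v) ⬝ᵥ (M *ᵥ (u + s • v))
        = u ⬝ᵥ (M *ᵥ u) + 2 * s * (u ⬝ᵥ (M *ᵥ v)) + s ^ 2 * (v ⬝ᵥ (M *ᵥ v)) := by
      rw [Matrix.mulVec_add, Matrix.mulVec_smul]
      simp only [dotProduct_add, add_dotProduct, dotProduct_smul,
        smul_dotProduct, smul_eq_mul]
      rw [symdot hMsym v u]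
      ring
    have e2 : (u - s • v) ⬝ᵥ (M *ᵥ (u - s • v))
        = u ⬝ᵥ (M *ᵥ u) - 2 * s * (u ⬝ᵥ (M *ᵥ v)) + s ^ 2 * (v ⬝ᵥ (M *ᵥ v)) := by
      rw [Matrix.mulVec_sub, Matrix.mulVec_smul]
      simp only [dotProduct_sub, sub_dotProduct, dotProduct_smul,
        smul_dotProduct, smul_eq_mul]
      rw [symdot hMsym v u]
      ring
    have e3 : (u + s • v) ⬝ᵥ (u + s • v)
        = u ⬝ᵥ u + 2 * s * (u ⬝ᵥ v) + s ^ 2 * (v ⬝ᵥ v) := by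
      simp only [dotProduct_add, add_dotProduct, dotProduct_smul,
        smul_dotProduct, smul_eq_mul]
      rw [dotProduct_comm v u]
      ring
    have e4 : 0 ≤ u ⬝ᵥ u - 2 * s * (u ⬝ᵥ v) + s ^ 2 * (v ⬝ᵥ v) := by
      have h := dot_self_nonneg (u - s • v)
      simp only [dotProduct_sub, sub_dotProduct, dotProduct_smul,
        smul_dotProduct, smul_eq_mul] at h
      rw [dotProduct_comm v u] at h
      nlinarith [h]
    rw [e1, e3] at ha
    rw [e2] at hb
    nlinarith [ha, hb, e4, hc0]
  set L : ℕ → ℝ := fun k =>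
    (r (k + 1) ⬝ᵥ r (k + 1)) + β * (r k ⬝ᵥ r k) - r (k + 1) ⬝ᵥ (M *ᵥ r k) with hLdef
  have hLrec : ∀ k, L (k + 1) = β * L k := by
    intro k
    have h2 := hrec k
    simp only [hLdef]
    rw [h2]
    simp only [sub_dotProduct, dotProduct_sub, smul_dotProduct,
      dotProduct_smul, smul_eq_mul]
    have hsy : r k ⬝ᵥ (M *ᵥ r (k + 1)) = r (k + 1) ⬝ᵥ (M *ᵥ r k) := symdot hMsym _ _
    have hco : (M *ᵥ r (k + 1)) ⬝ᵥ r k = r k ⬝ᵥ (M *ᵥ r (k + 1)) := dotProduct_comm _ _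
    rw [hco, hsy]
    ring
  have hLgeom : ∀ k, L k = β ^ k * L 0 := by
    intro k
    induction k with
    | zero => simp
    | succ n ih => rw [hLrec n, ih]; ring
  have hcoer : ∀ k, (2 * s - c) * (r (k + 1) ⬝ᵥ r (k + 1)) ≤ 2 * s * L k := by
    intro k
    have hx := hcross (r (k + 1)) (hmem (k + 1)) (r k) (hmem k)
    have h0 := dot_self_nonneg (r k)
    have h1 := dot_self_nonneg (r (k + 1))
    simp only [hLdef]
    have hx' : 2 * s * (r (k + 1) ⬝ᵥ (M *ᵥ r k))
        ≤ c * (r (k + 1) ⬝ᵥ r (k + 1)) + c * β * (r k ⬝ᵥ r k) := by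
      rw [← hs2]; exact hx
    have hprod : 0 ≤ β * (2 * s - c) * (r k ⬝ᵥ r k) :=
      mul_nonneg (mul_nonneg hβ.le (by linarith)) h0
    nlinarith [hx', hprod, h0, h1]
  have hL0 : 0 ≤ L 0 := by
    have := hcoer 0
    nlinarith [dot_self_nonneg (r 1), hs0, hc]
  set ε : ℝ := 2 * s - c with hεdef
  have hε : 0 < ε := by simp only [hεdef]; linarith
  refine ⟨max (r 0 ⬝ᵥ r 0) (2 * s * L 0 / (ε * β)) + 1, ?_, ?_⟩
  · have := dot_self_nonneg (r 0)
    have h := le_max_left (r 0 ⬝ᵥ r 0) (2 * s * L 0 / (ε * β))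
    linarith
  · intro k
    cases k with
    | zero =>
      simp only [pow_zero, one_mul]
      have h := le_max_left (r 0 ⬝ᵥ r 0) (2 * s * L 0 / (ε * β))
      linarith
    | succ n =>
      have hβn : (0:ℝ) < β ^ n := pow_pos hβ n
      have h1 : ε * (r (n + 1) ⬝ᵥ r (n + 1)) ≤ 2 * s * (β ^ n * L 0) := by
        have := hcoer n
        rw [hLgeom n] at this
        exact this
      have hCmax : 2 * s * L 0 / (ε * β) ≤ max (r 0 ⬝ᵥ r 0) (2 * s * L 0 / (ε * β)) + 1 := by
        have := le_max_right (r 0 ⬝ᵥ r 0) (2 * s * L 0 / (ε * β))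
        linarith
      have hεβ : 0 < ε * β := mul_pos hε hβ
      have h2 : 2 * s * L 0 ≤ ε * β * (max (r 0 ⬝ᵥ r 0) (2 * s * L 0 / (ε * β)) + 1) := by
        rw [← div_le_iff₀' hεβ]
        exact hCmax
      have h3 : 2 * s * (β ^ n * L 0)
          ≤ β ^ n * (ε * β * (max (r 0 ⬝ᵥ r 0) (2 * s * L 0 / (ε * β)) + 1)) := by
        have := mul_le_mul_of_nonneg_left h2 hβn.le
        nlinarith [this]
      have h4 : ε * (r (n + 1) ⬝ᵥ r (n + 1))
          ≤ ε * (β ^ (n + 1) * (max (r 0 ⬝ᵥ r 0) (2 * s * L 0 / (ε * β)) + 1)) := by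
        calc ε * (r (n + 1) ⬝ᵥ r (n + 1)) ≤ 2 * s * (β ^ n * L 0) := h1
          _ ≤ β ^ n * (ε * β * (max (r 0 ⬝ᵥ r 0) (2 * s * L 0 / (ε * β)) + 1)) := h3
          _ = ε * (β ^ (n + 1) * (max (r 0 ⬝ᵥ r 0) (2 * s * L 0 / (ε * β)) + 1)) := by ring
      exact le_of_mul_le_mul_left h4 hε

lemma meas_entry {m n : ℕ} {Ω : Type*} {m0 : MeasurableSpace Ω}
    {F : Ω → Matrix (Fin m) (Fin n) ℝ} (hF : Measurable[m0] F) (i : Fin m) (j : Fin n) :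
    Measurable[m0] fun s => F s i j := by
  have h1 : Measurable[m0] fun s => F s i := (measurable_pi_apply i).comp hF
  exact (measurable_pi_apply j).comp h1

lemma meas_step {m d : ℕ} {Ω : Type*} {m0 : MeasurableSpace Ω}
    (A : Matrix (Fin m) (Fin d) ℝ) (b : Fin m → ℝ) (ω β : ℝ)
    {Hk : Ω → Matrix (Fin m) (Fin m) ℝ} {xa xb : Ω → Fin d → ℝ}
    (hH : Measurable[m0] Hk) (ha : Measurable[m0] xa) (hb : Measurable[m0] xb) :
    Measurable[m0] fun s =>
      xa s - ω • (Aᵀ *ᵥ (Hk s *ᵥ (A *ᵥ xa s - b))) + β • (xa s - xb s) := by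
  have hEntH : ∀ i j, Measurable[m0] fun s => Hk s i j := fun i j => meas_entry hH i j
  have hEa : ∀ i, Measurable[m0] fun s => xa s i := fun i => (measurable_pi_apply i).comp ha
  have hEb : ∀ i, Measurable[m0] fun s => xb s i := fun i => (measurable_pi_apply i).comp hb
  apply measurable_pi_lambda
  intro i
  simp only [Pi.add_apply, Pi.sub_apply, Pi.smul_apply, smul_eq_mul, Matrix.mulVec,
    dotProduct]
  apply Measurable.add
  · apply Measurable.sub (hEa i)
    apply Measurable.const_mul
    apply Finset.measurable_sum
    intro j _
    apply Measurable.const_mul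
    apply Finset.measurable_sum
    intro l _
    apply Measurable.mul (hEntH j l)
    apply Measurable.sub _ measurable_const
    apply Finset.measurable_sum
    intro t _
    exact (hEa t).const_mul _
  · exact ((hEa i).sub (hEb i)).const_mul β

end SHBaux

/-- L1 (expected-iterates) accelerated linear convergence of SHB.
Assume exactness, and let the SHB iterates be started from `x0, x1 ∈ ℝ^d` with
`x0 − x1 ∈ Range Aᵀ`, with stepsize `0 < ω ≤ 1/λmax` and momentum parameter `β`
satisfying `(1 − sqrt(ω λmin⁺))² < β < 1`.  Let `x*` be the orthogonal projection of
`x0` onto `{x : A x = b}`.  Then there exists a constant `C > 0` such that for all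
`k ≥ 0`, `‖E[x_k − x*]‖² ≤ β^k C`. -/
theorem shb_L1_accelerated_linear_convergence {m d : ℕ}
    {Ω : Type*} [MeasurableSpace Ω] (μ : Measure Ω) [IsProbabilityMeasure μ]
    (A : Matrix (Fin m) (Fin d) ℝ) (b : Fin m → ℝ)
    -- the i.i.d. random matrices `H_k`, a.s. symmetric psd with `H A Aᵀ H = H`
    (H : ℕ → Ω → Matrix (Fin m) (Fin m) ℝ)
    (hHmeas : ∀ k, Measurable (H k))
    (hHiid : iIndepFun H μ)
    (hHident : ∀ k, μ.map (H k) = μ.map (H 0))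
    (hHas : ∀ k, ∀ᵐ s ∂μ, (H k s).PosSemidef ∧ H k s * (A * Aᵀ) * H k s = H k s)
    (hHint : ∀ k i j, Integrable (fun s => H k s i j) μ)
    -- `W = E[H_0]`
    (W : Matrix (Fin m) (Fin m) ℝ)
    (hW : ∀ i j, W i j = ∫ s, H 0 s i j ∂μ)
    -- the objective `f` and exactness
    (f : (Fin d → ℝ) → ℝ)
    (hf : ∀ y, f y = (1 / 2) * ((A *ᵥ y - b) ⬝ᵥ (W *ᵥ (A *ᵥ y - b))))
    (hexact : {y : Fin d → ℝ | f y = 0} = {y : Fin d → ℝ | A *ᵥ y = b})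
    -- `λmin⁺` and `λmax`: smallest nonzero / largest eigenvalue of `Aᵀ W A`
    (lmin lmax : ℝ) (hlmin_pos : 0 < lmin) (hlmax_pos : 0 < lmax)
    (hlmin : ∀ v : Fin d → ℝ, (∃ u, v = Aᵀ *ᵥ u) →
      lmin * (v ⬝ᵥ v) ≤ v ⬝ᵥ ((Aᵀ * W * A) *ᵥ v))
    (hlmax : ∀ v : Fin d → ℝ, v ⬝ᵥ ((Aᵀ * W * A) *ᵥ v) ≤ lmax * (v ⬝ᵥ v))
    -- parameters
    (ω β : ℝ) (hω0 : 0 < ω) (hω : ω ≤ 1 / lmax)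
    (hβlow : (1 - Real.sqrt (ω * lmin)) ^ 2 < β) (hβhigh : β < 1)
    -- the SHB iterates, started from deterministic `x0, x1` with `x0 − x1 ∈ Range Aᵀ`
    (x0 x1 : Fin d → ℝ) (hx01 : ∃ u, x0 - x1 = Aᵀ *ᵥ u)
    (x : ℕ → Ω → (Fin d → ℝ))
    (hx0 : ∀ s, x 0 s = x0) (hx1 : ∀ s, x 1 s = x1)
    (hrec : ∀ k, 1 ≤ k → ∀ s,
      x (k + 1) s = x k s - ω • (Aᵀ *ᵥ (H k s *ᵥ (A *ᵥ x k s - b)))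
        + β • (x k s - x (k - 1) s))
    -- `x*` is the orthogonal projection of `x0` onto `{x : A x = b}`
    (xstar : Fin d → ℝ) (hxstar : A *ᵥ xstar = b)
    (hproj : ∀ y : Fin d → ℝ, A *ᵥ y = b →
      (x0 - xstar) ⬝ᵥ (x0 - xstar) ≤ (x0 - y) ⬝ᵥ (x0 - y)) :
    ∃ C : ℝ, 0 < C ∧ ∀ k : ℕ,
      (fun i => ∫ s, (x k s i - xstar i) ∂μ) ⬝ᵥ (fun i => ∫ s, (x k s i - xstar i) ∂μ)
        ≤ β ^ k * C := by
  classical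
  have hβpos : 0 < β := lt_of_le_of_lt (sq_nonneg _) hβlow
  set Hm : Matrix (Fin d) (Fin d) ℝ := Aᵀ * W * A with hHmdef
  set Mm : Matrix (Fin d) (Fin d) ℝ := (1 + β) • (1 : Matrix (Fin d) (Fin d) ℝ) - ω • Hm
    with hMmdef
  set r : ℕ → Fin d → ℝ := fun k => fun i => ∫ s, (x k s i - xstar i) ∂μ with hrdef
  -- pointwise recursion in error form
  have hAe : ∀ k (s : Ω), A *ᵥ x k s - b = A *ᵥ (x k s - xstar) := by
    intro k s; rw [Matrix.mulVec_sub, hxstar]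
  have hstep : ∀ k (s : Ω), x (k + 2) s - xstar
      = (x (k + 1) s - xstar)
        - ω • ((Aᵀ * H (k + 1) s * A) *ᵥ (x (k + 1) s - xstar))
        + β • ((x (k + 1) s - xstar) - (x k s - xstar)) := by
    intro k s
    have h := hrec (k + 1) (Nat.le_add_left 1 k) s
    rw [hAe (k + 1) s] at h
    rw [Matrix.mulVec_mulVec, Matrix.mulVec_mulVec] at h
    have h2 : (x (k + 1) s - xstar) - (x k s - xstar) = x (k + 1) s - x k s := by abel
    rw [h2, h]
    abel
  -- a.e. entry bound for the projection matrices
  have hPent : ∀ k, ∀ᵐ s ∂μ, ∀ i j, |(Aᵀ * H k s * A) i j| ≤ 1 := by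
    intro k
    filter_upwards [hHas k] with s hs
    have hHt : (H k s)ᵀ = H k s := by
      rw [← Matrix.conjTranspose_eq_transpose_of_trivial]
      exact hs.1.1
    have hsym : (Aᵀ * H k s * A)ᵀ = Aᵀ * H k s * A := by
      rw [Matrix.transpose_mul, Matrix.transpose_mul, Matrix.transpose_transpose, hHt]
      exact (Matrix.mul_assoc _ _ _).symm
    have hidem : (Aᵀ * H k s * A) * (Aᵀ * H k s * A) = Aᵀ * H k s * A := by
      have hmid : Aᵀ * (H k s * (A * Aᵀ) * H k s) * A
          = Aᵀ * H k s * A * (Aᵀ * H k s * A) := by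
        simp only [Matrix.mul_assoc]
      rw [← hmid, hs.2]
    intro i j
    exact SHBaux.entry_abs_le_one hsym hidem i j
  -- plain measurability of the iterates
  have hxMeas : ∀ k, Measurable (x k) := by
    intro k
    induction k using Nat.strong_induction_on with
    | _ k ih =>
      rcases k with _ | k1
      · have hx0' : x 0 = fun _ => x0 := funext hx0
        rw [hx0']; exact measurable_const
      rcases k1 with _ | j
      · have hx1' : x 1 = fun _ => x1 := funext hx1
        rw [hx1']; exact measurable_const
      · have hxe : x (j + 2) = fun s =>
            x (j + 1) s - ω • (Aᵀ *ᵥ (H (j + 1) s *ᵥ (A *ᵥ x (j + 1) s - b)))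
              + β • (x (j + 1) s - x j s) := by
          funext s
          exact hrec (j + 1) (Nat.le_add_left 1 j) s
        rw [hxe]
        exact SHBaux.meas_step A b ω β (hHmeas (j + 1)) (ih (j + 1) (by omega)) (ih j (by omega))
  -- a.e. uniform bounds on the error
  have hbound : ∀ k, ∃ B : ℝ, 0 ≤ B ∧ ∀ᵐ s ∂μ, ∀ i, |x k s i - xstar i| ≤ B := by
    intro k
    induction k using Nat.strong_induction_on with
    | _ k ih =>
      rcases k with _ | k1
      · refine ⟨∑ i, |x0 i - xstar i|, Finset.sum_nonneg fun i _ => abs_nonneg _,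
          ae_of_all _ fun s i => ?_⟩
        rw [hx0 s]
        exact Finset.single_le_sum (f := fun i => |x0 i - xstar i|)
          (fun i _ => abs_nonneg _) (Finset.mem_univ i)
      rcases k1 with _ | j
      · refine ⟨∑ i, |x1 i - xstar i|, Finset.sum_nonneg fun i _ => abs_nonneg _,
          ae_of_all _ fun s i => ?_⟩
        rw [hx1 s]
        exact Finset.single_le_sum (f := fun i => |x1 i - xstar i|)
          (fun i _ => abs_nonneg _) (Finset.mem_univ i)
      · obtain ⟨B1, hB1n, hB1⟩ := ih (j + 1) (by omega)
        obtain ⟨B0, hB0n, hB0⟩ := ih j (by omega)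
        refine ⟨B1 + ω * ((d : ℝ) * B1) + β * (B1 + B0), ?_, ?_⟩
        · have h1 : 0 ≤ ω * ((d : ℝ) * B1) :=
            mul_nonneg hω0.le (mul_nonneg (Nat.cast_nonneg d) hB1n)
          have h2 : 0 ≤ β * (B1 + B0) := mul_nonneg hβpos.le (by linarith)
          linarith
        · filter_upwards [hPent (j + 1), hB1, hB0] with s hs1 hs2 hs3
          intro i
          have hptw := congrFun (hstep j s) i
          simp only [Pi.add_apply, Pi.sub_apply, Pi.smul_apply, smul_eq_mul, Matrix.mulVec,
            dotProduct] at hptw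
          show |x (j + 2) s i - xstar i| ≤ _
          rw [hptw]
          have hS : |∑ j', (Aᵀ * H (j + 1) s * A) i j' * (x (j + 1) s j' - xstar j')|
              ≤ (d : ℝ) * B1 := by
            calc |∑ j', (Aᵀ * H (j + 1) s * A) i j' * (x (j + 1) s j' - xstar j')|
                ≤ ∑ j', |(Aᵀ * H (j + 1) s * A) i j' * (x (j + 1) s j' - xstar j')| :=
                  Finset.abs_sum_le_sum_abs _ _
              _ ≤ ∑ _j' : Fin d, B1 := by
                  refine Finset.sum_le_sum fun j' _ => ?_
                  rw [abs_mul]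
                  calc |(Aᵀ * H (j + 1) s * A) i j'| * |x (j + 1) s j' - xstar j'|
                      ≤ 1 * B1 := mul_le_mul (hs1 i j') (hs2 j') (abs_nonneg _) zero_le_one
                    _ = B1 := one_mul _
              _ = (d : ℝ) * B1 := by
                  simp [Finset.sum_const, Finset.card_univ]
          have hD : |(x (j + 1) s i - xstar i) - (x j s i - xstar i)| ≤ B1 + B0 := by
            calc |(x (j + 1) s i - xstar i) - (x j s i - xstar i)|
                ≤ |x (j + 1) s i - xstar i| + |x j s i - xstar i| := abs_sub _ _
              _ ≤ B1 + B0 := add_le_add (hs2 i) (hs3 i)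
          have ht1 : |x (j + 1) s i - xstar i
                - ω * ∑ j', (Aᵀ * H (j + 1) s * A) i j' * (x (j + 1) s j' - xstar j')
                + β * ((x (j + 1) s i - xstar i) - (x j s i - xstar i))|
              ≤ |x (j + 1) s i - xstar i|
                + ω * |∑ j', (Aᵀ * H (j + 1) s * A) i j' * (x (j + 1) s j' - xstar j')|
                + β * |(x (j + 1) s i - xstar i) - (x j s i - xstar i)| := by
            calc |x (j + 1) s i - xstar i
                - ω * ∑ j', (Aᵀ * H (j + 1) s * A) i j' * (x (j + 1) s j' - xstar j')
                + β * ((x (j + 1) s i - xstar i) - (x j s i - xstar i))|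
                ≤ |x (j + 1) s i - xstar i
                    - ω * ∑ j', (Aᵀ * H (j + 1) s * A) i j' * (x (j + 1) s j' - xstar j')|
                  + |β * ((x (j + 1) s i - xstar i) - (x j s i - xstar i))| := abs_add_le _ _
              _ ≤ |x (j + 1) s i - xstar i|
                  + |ω * ∑ j', (Aᵀ * H (j + 1) s * A) i j' * (x (j + 1) s j' - xstar j')|
                  + |β * ((x (j + 1) s i - xstar i) - (x j s i - xstar i))| := by
                    linarith [abs_sub (x (j + 1) s i - xstar i)
                      (ω * ∑ j', (Aᵀ * H (j + 1) s * A) i j' * (x (j + 1) s j' - xstar j'))]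
              _ = |x (j + 1) s i - xstar i|
                  + ω * |∑ j', (Aᵀ * H (j + 1) s * A) i j' * (x (j + 1) s j' - xstar j')|
                  + β * |(x (j + 1) s i - xstar i) - (x j s i - xstar i)| := by
                    rw [abs_mul, abs_mul, abs_of_pos hω0, abs_of_pos hβpos]
          have hfin := le_trans ht1 (by
            have := mul_le_mul_of_nonneg_left hS hω0.le
            have := mul_le_mul_of_nonneg_left hD hβpos.le
            linarith [hs2 i] :
            |x (j + 1) s i - xstar i|
              + ω * |∑ j', (Aᵀ * H (j + 1) s * A) i j' * (x (j + 1) s j' - xstar j')|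
              + β * |(x (j + 1) s i - xstar i) - (x j s i - xstar i)|
              ≤ B1 + ω * ((d : ℝ) * B1) + β * (B1 + B0))
          exact hfin
  -- integrability of error components
  have hInt_e : ∀ k i, Integrable (fun s => x k s i - xstar i) μ := by
    intro k i
    obtain ⟨B, hBn, hB⟩ := hbound k
    have hmeas : Measurable fun s => x k s i - xstar i := by
      have h1 : Measurable fun s => x k s i := (measurable_pi_apply i).comp (hxMeas k)
      exact h1.sub measurable_const
    refine (integrable_const B).mono' hmeas.aestronglyMeasurable ?_
    filter_upwards [hB] with s hs
    simpa [Real.norm_eq_abs] using hs i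
  -- measurability of P entries
  have hPmeas : ∀ k i j, Measurable fun s => (Aᵀ * H k s * A) i j := by
    intro k i j
    simp only [Matrix.mul_apply]
    apply Finset.measurable_sum
    intro a _
    apply Measurable.mul _ measurable_const
    apply Finset.measurable_sum
    intro c _
    exact (SHBaux.meas_entry (hHmeas k) c a).const_mul _
  -- integrability of P entries and products
  have hInt_P : ∀ k i j, Integrable (fun s => (Aᵀ * H k s * A) i j) μ := by
    intro k i j
    refine (integrable_const (1 : ℝ)).mono' (hPmeas k i j).aestronglyMeasurable ?_
    filter_upwards [hPent k] with s hs
    simpa [Real.norm_eq_abs] using hs i j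
  have hInt_Pe : ∀ k i j, Integrable
      (fun s => (Aᵀ * H k s * A) i j * (x k s j - xstar j)) μ := by
    intro k i j
    obtain ⟨B, hBn, hB⟩ := hbound k
    have hmeas : Measurable fun s => (Aᵀ * H k s * A) i j * (x k s j - xstar j) := by
      have h1 : Measurable fun s => x k s j := (measurable_pi_apply j).comp (hxMeas k)
      exact (hPmeas k i j).mul (h1.sub measurable_const)
    refine (integrable_const B).mono' hmeas.aestronglyMeasurable ?_
    filter_upwards [hPent k, hB] with s hs1 hs2
    rw [Real.norm_eq_abs, abs_mul]
    calc |(Aᵀ * H k s * A) i j| * |x k s j - xstar j| ≤ 1 * B :=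
        mul_le_mul (hs1 i j) (hs2 j) (abs_nonneg _) zero_le_one
      _ = B := one_mul _
  -- expectation of the entries of H and of P
  have hHexp : ∀ k a c, ∫ s, H k s a c ∂μ = W a c := by
    intro k a c
    have hev : Measurable fun M : Matrix (Fin m) (Fin m) ℝ => M a c := by
      have h1 : Measurable fun M : Matrix (Fin m) (Fin m) ℝ => M a := measurable_pi_apply a
      exact (measurable_pi_apply c).comp h1
    calc ∫ s, H k s a c ∂μ
        = ∫ M, M a c ∂(μ.map (H k)) :=
          (integral_map (hHmeas k).aemeasurable hev.aestronglyMeasurable).symm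
      _ = ∫ M, M a c ∂(μ.map (H 0)) := by rw [hHident k]
      _ = ∫ s, H 0 s a c ∂μ := integral_map (hHmeas 0).aemeasurable hev.aestronglyMeasurable
      _ = W a c := (hW a c).symm
  have hEP : ∀ k i j, ∫ s, (Aᵀ * H k s * A) i j ∂μ = Hm i j := by
    intro k i j
    have hexpand : ∀ N : Matrix (Fin m) (Fin m) ℝ,
        (Aᵀ * N * A) i j = ∑ a, ∑ c, Aᵀ i c * N c a * A a j := by
      intro N
      simp only [Matrix.mul_apply, Finset.sum_mul]
    have h1 : (fun s => (Aᵀ * H k s * A) i j)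
        = fun s => ∑ a, ∑ c, Aᵀ i c * H k s c a * A a j := by
      funext s; exact hexpand (H k s)
    rw [h1]
    rw [integral_finset_sum _ (fun a _ => integrable_finset_sum _ (fun c _ =>
      ((hHint k c a).const_mul (Aᵀ i c)).mul_const (A a j)))]
    have h2 : ∀ a, ∫ s, ∑ c, Aᵀ i c * H k s c a * A a j ∂μ
        = ∑ c, Aᵀ i c * W c a * A a j := by
      intro a
      rw [integral_finset_sum _ (fun c _ =>
        ((hHint k c a).const_mul (Aᵀ i c)).mul_const (A a j))]
      refine Finset.sum_congr rfl fun c _ => ?_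
      have h3 : (fun s => Aᵀ i c * H k s c a * A a j)
          = fun s => (Aᵀ i c * A a j) * H k s c a := by
        funext s; ring
      rw [h3, integral_const_mul, hHexp k c a]
      ring
    rw [Finset.sum_congr rfl fun a _ => h2 a]
    rw [hHmdef, hexpand W]
  -- independence of H K and x K for K ≥ 1
  have hindep : ∀ K, 1 ≤ K → IndepFun (H K) (x K) μ := by
    intro K hK
    have hdisj : Disjoint ({K} : Finset ℕ) (Finset.Ico 1 K) := by
      simp [Finset.disjoint_left]
    have hbig := hHiid.indepFun_finset {K} (Finset.Ico 1 K) hdisj hHmeas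
    rw [IndepFun_iff_Indep] at hbig ⊢
    have hle1 : MeasurableSpace.comap (H K) inferInstance ≤
        MeasurableSpace.comap (fun a (i : ({K} : Finset ℕ)) => H i a) inferInstance := by
      have hcomp : H K = (fun v : ({K} : Finset ℕ) → Matrix (Fin m) (Fin m) ℝ =>
          v ⟨K, Finset.mem_singleton_self K⟩) ∘ (fun a (i : ({K} : Finset ℕ)) => H i a) := rfl
      rw [hcomp, ← MeasurableSpace.comap_comp]
      exact MeasurableSpace.comap_mono (measurable_pi_apply _).comap_le
    have hle2 : MeasurableSpace.comap (x K) inferInstance ≤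
        MeasurableSpace.comap (fun a (i : (Finset.Ico 1 K : Finset ℕ)) => H i a)
          inferInstance := by
      apply Measurable.comap_le
      have hxm : ∀ j, j ≤ K → Measurable[MeasurableSpace.comap
          (fun a (i : (Finset.Ico 1 K : Finset ℕ)) => H i a) inferInstance] (x j) := by
        intro j
        induction j using Nat.strong_induction_on with
        | _ j ih =>
          rcases j with _ | j1
          · intro _
            have hx0' : x 0 = fun _ => x0 := funext hx0
            rw [hx0']; exact measurable_const
          rcases j1 with _ | j2
          · intro _
            have hx1' : x 1 = fun _ => x1 := funext hx1
            rw [hx1']; exact measurable_const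
          · intro hjK
            have hmem : (j2 + 1) ∈ Finset.Ico 1 K := Finset.mem_Ico.mpr ⟨by omega, by omega⟩
            have hHj : Measurable[MeasurableSpace.comap
                (fun a (i : (Finset.Ico 1 K : Finset ℕ)) => H i a) inferInstance]
                (H (j2 + 1)) := by
              have hcomp : H (j2 + 1)
                  = (fun v : (Finset.Ico 1 K : Finset ℕ) → Matrix (Fin m) (Fin m) ℝ =>
                      v ⟨j2 + 1, hmem⟩)
                    ∘ (fun a (i : (Finset.Ico 1 K : Finset ℕ)) => H i a) := rfl
              rw [hcomp]
              exact (measurable_pi_apply _).comp (Measurable.of_comap_le le_rfl)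
            have hxe : x (j2 + 2) = fun s =>
                x (j2 + 1) s - ω • (Aᵀ *ᵥ (H (j2 + 1) s *ᵥ (A *ᵥ x (j2 + 1) s - b)))
                  + β • (x (j2 + 1) s - x j2 s) := by
              funext s
              exact hrec (j2 + 1) (Nat.le_add_left 1 j2) s
            rw [hxe]
            exact SHBaux.meas_step A b ω β hHj (ih (j2 + 1) (by omega) (by omega))
              (ih j2 (by omega) (by omega))
      exact hxm K le_rfl
    exact indep_of_indep_of_le_right (indep_of_indep_of_le_left hbig hle1) hle2
  -- factorization of expectations
  have hfact : ∀ K, 1 ≤ K → ∀ i j,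
      ∫ s, (Aᵀ * H K s * A) i j * (x K s j - xstar j) ∂μ
        = (∫ s, (Aᵀ * H K s * A) i j ∂μ) * ∫ s, (x K s j - xstar j) ∂μ := by
    intro K hK i j
    have hφ : Measurable fun N : Matrix (Fin m) (Fin m) ℝ => (Aᵀ * N * A) i j := by
      simp only [Matrix.mul_apply]
      apply Finset.measurable_sum
      intro a _
      apply Measurable.mul _ measurable_const
      apply Finset.measurable_sum
      intro c _
      have h1 : Measurable fun N : Matrix (Fin m) (Fin m) ℝ => N c a := by
        have h2 : Measurable fun N : Matrix (Fin m) (Fin m) ℝ => N c := measurable_pi_apply c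
        exact (measurable_pi_apply a).comp h2
      exact h1.const_mul _
    have hψ : Measurable fun v : Fin d → ℝ => v j - xstar j :=
      (measurable_pi_apply j).sub measurable_const
    have h1 : IndepFun (fun s => (Aᵀ * H K s * A) i j) (fun s => x K s j - xstar j) μ :=
      (hindep K hK).comp hφ hψ
    exact h1.integral_mul_eq_mul_integral (hInt_P K i j).1 (hInt_e K j).1
  -- recursion for the expected error
  have hrrec : ∀ k, r (k + 2) = Mm *ᵥ r (k + 1) - β • r k := by
    intro k
    funext i
    have hptw : ∀ s : Ω, x (k + 2) s i - xstar i
        = (x (k + 1) s i - xstar i)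
          - ω * ∑ j, (Aᵀ * H (k + 1) s * A) i j * (x (k + 1) s j - xstar j)
          + β * ((x (k + 1) s i - xstar i) - (x k s i - xstar i)) := by
      intro s
      have h := congrFun (hstep k s) i
      simpa [Matrix.mulVec, dotProduct, Pi.add_apply, Pi.sub_apply, Pi.smul_apply,
        smul_eq_mul] using h
    have hfun : (fun s => x (k + 2) s i - xstar i)
        = fun s => (x (k + 1) s i - xstar i)
          - ω * ∑ j, (Aᵀ * H (k + 1) s * A) i j * (x (k + 1) s j - xstar j)
          + β * ((x (k + 1) s i - xstar i) - (x k s i - xstar i)) := funext hptw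
    have hI2 : Integrable (fun s =>
        ω * ∑ j, (Aᵀ * H (k + 1) s * A) i j * (x (k + 1) s j - xstar j)) μ :=
      (integrable_finset_sum _ (fun j _ => hInt_Pe (k + 1) i j)).const_mul ω
    have hI3 : Integrable (fun s =>
        β * ((x (k + 1) s i - xstar i) - (x k s i - xstar i))) μ :=
      ((hInt_e (k + 1) i).sub (hInt_e k i)).const_mul β
    have hL : r (k + 2) i
        = r (k + 1) i - ω * ∑ j, Hm i j * r (k + 1) j + β * (r (k + 1) i - r k i) := by
      show (∫ s, (x (k + 2) s i - xstar i) ∂μ) = _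
      rw [hfun]
      have hI1 : Integrable (fun s => x (k + 1) s i - xstar i) μ := hInt_e (k + 1) i
      have hI0 : Integrable (fun s => x k s i - xstar i) μ := hInt_e k i
      have hI12 : Integrable (fun s => (x (k + 1) s i - xstar i)
          - ω * ∑ j, (Aᵀ * H (k + 1) s * A) i j * (x (k + 1) s j - xstar j)) μ := hI1.sub hI2
      have hI10 : Integrable (fun s => (x (k + 1) s i - xstar i) - (x k s i - xstar i)) μ :=
        hI1.sub hI0
      rw [integral_add hI12 hI3, integral_sub hI1 hI2, integral_const_mul, integral_const_mul,
        integral_finset_sum _ (fun j _ => hInt_Pe (k + 1) i j), integral_sub hI1 hI0]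
      have hsum : ∀ j : Fin d, ∫ s, (Aᵀ * H (k + 1) s * A) i j * (x (k + 1) s j - xstar j) ∂μ
          = Hm i j * r (k + 1) j := by
        intro j
        rw [hfact (k + 1) (Nat.le_add_left 1 k) i j, hEP (k + 1) i j]
      rw [Finset.sum_congr rfl fun j _ => hsum j]
    have hR : (Mm *ᵥ r (k + 1) - β • r k) i
        = r (k + 1) i - ω * ∑ j, Hm i j * r (k + 1) j + β * (r (k + 1) i - r k i) := by
      rw [hMmdef]
      rw [Matrix.sub_mulVec, Matrix.smul_mulVec, Matrix.one_mulVec,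
        Matrix.smul_mulVec]
      simp only [Pi.sub_apply, Pi.smul_apply, smul_eq_mul, Matrix.mulVec, dotProduct]
      ring
    rw [hL, hR]
  -- explicit values of r 0 and r 1
  have hr0 : r 0 = x0 - xstar := by
    funext i
    show (∫ s, (x 0 s i - xstar i) ∂μ) = _
    have : (fun s => x 0 s i - xstar i) = fun _ => x0 i - xstar i := by
      funext s; rw [hx0 s]
    rw [this, integral_const]
    simp
  have hr1 : r 1 = x1 - xstar := by
    funext i
    show (∫ s, (x 1 s i - xstar i) ∂μ) = _
    have : (fun s => x 1 s i - xstar i) = fun _ => x1 i - xstar i := by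
      funext s; rw [hx1 s]
    rw [this, integral_const]
    simp
  -- r 0 lies in the range of Aᵀ
  have horth : ∀ z : Fin d → ℝ, A *ᵥ z = 0 → (x0 - xstar) ⬝ᵥ z = 0 := by
    intro z hz
    apply SHBaux.eq_zero_of_forall_scale (SHBaux.dot_self_nonneg z)
    intro t
    have hfeas : A *ᵥ (xstar + t • z) = b := by
      rw [Matrix.mulVec_add, Matrix.mulVec_smul, hz, hxstar]
      simp
    have h := hproj (xstar + t • z) hfeas
    have hexp : (x0 - (xstar + t • z)) ⬝ᵥ (x0 - (xstar + t • z))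
        = (x0 - xstar) ⬝ᵥ (x0 - xstar) - 2 * t * ((x0 - xstar) ⬝ᵥ z) + t ^ 2 * (z ⬝ᵥ z) := by
      have hv : x0 - (xstar + t • z) = (x0 - xstar) - t • z := by abel
      rw [hv]
      generalize x0 - xstar = v
      simp only [dotProduct_sub, sub_dotProduct, dotProduct_smul,
        smul_dotProduct, smul_eq_mul]
      rw [dotProduct_comm z v]
      ring
    rw [hexp] at h
    linarith
  obtain ⟨u0, hu0⟩ := SHBaux.mem_range_transpose A (x0 - xstar) horth
  -- the submodule Range Aᵀ and membership of all r k
  set Rg : Submodule ℝ (Fin d → ℝ) := LinearMap.range (Matrix.mulVecLin Aᵀ) with hRgdef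
  have hmemAT : ∀ w : Fin m → ℝ, (Aᵀ *ᵥ w) ∈ Rg := fun w => ⟨w, rfl⟩
  have hmemRg : ∀ k, r k ∈ Rg := by
    intro k
    induction k using Nat.strong_induction_on with
    | _ k ih =>
      rcases k with _ | k1
      · rw [hr0, hu0]; exact hmemAT u0
      rcases k1 with _ | j
      · obtain ⟨u1, hu1⟩ := hx01
        have h1 : r 1 = (x0 - xstar) - (x0 - x1) := by rw [hr1]; abel
        rw [h1, hu0, hu1]
        exact Rg.sub_mem (hmemAT u0) (hmemAT u1)
      · rw [hrrec j]
        have hMv : Mm *ᵥ r (j + 1)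
            = (1 + β) • r (j + 1) - ω • (Aᵀ *ᵥ (W *ᵥ (A *ᵥ r (j + 1)))) := by
          rw [hMmdef, Matrix.sub_mulVec, Matrix.smul_mulVec, Matrix.one_mulVec,
            Matrix.smul_mulVec, hHmdef, Matrix.mulVec_mulVec, Matrix.mulVec_mulVec]
        rw [hMv]
        exact Rg.sub_mem
          (Rg.sub_mem (Rg.smul_mem _ (ih (j + 1) (by omega)))
            (Rg.smul_mem _ (hmemAT _)))
          (Rg.smul_mem _ (ih j (by omega)))
  -- symmetry of W, Hm, Mm
  have hWsym : Wᵀ = W := by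
    ext i j
    rw [Matrix.transpose_apply, hW j i, hW i j]
    apply integral_congr_ae
    filter_upwards [hHas 0] with s hs
    have hHt : (H 0 s)ᵀ = H 0 s := by
      rw [← Matrix.conjTranspose_eq_transpose_of_trivial]
      exact hs.1.1
    calc H 0 s j i = (H 0 s)ᵀ i j := rfl
      _ = H 0 s i j := by rw [hHt]
  have hHmsym : Hmᵀ = Hm := by
    rw [hHmdef, Matrix.transpose_mul, Matrix.transpose_mul, Matrix.transpose_transpose, hWsym]
    exact (Matrix.mul_assoc _ _ _).symm
  have hMmsym : Mmᵀ = Mm := by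
    rw [hMmdef, Matrix.transpose_sub, Matrix.transpose_smul, Matrix.transpose_smul,
      Matrix.transpose_one, hHmsym]
  -- quadratic form bounds
  have hvMm : ∀ v : Fin d → ℝ,
      v ⬝ᵥ (Mm *ᵥ v) = (1 + β) * (v ⬝ᵥ v) - ω * (v ⬝ᵥ (Hm *ᵥ v)) := by
    intro v
    rw [hMmdef, Matrix.sub_mulVec, Matrix.smul_mulVec, Matrix.one_mulVec,
      Matrix.smul_mulVec, dotProduct_sub, dotProduct_smul,
      dotProduct_smul]
    simp [smul_eq_mul]
  have hωlmax : ω * lmax ≤ 1 := by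
    rw [le_div_iff₀ hlmax_pos] at hω
    linarith
  have hQ0 : ∀ v ∈ Rg, 0 ≤ v ⬝ᵥ (Mm *ᵥ v) := by
    intro v _
    rw [hvMm v]
    have h := hlmax v
    have h2 := mul_le_mul_of_nonneg_left h hω0.le
    have h3 : 0 ≤ (1 - ω * lmax) * (v ⬝ᵥ v) :=
      mul_nonneg (by linarith) (SHBaux.dot_self_nonneg v)
    nlinarith [SHBaux.dot_self_nonneg v, hβpos]
  have hQc : ∀ v ∈ Rg, v ⬝ᵥ (Mm *ᵥ v) ≤ max (1 + β - ω * lmin) 0 * (v ⬝ᵥ v) := by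
    intro v hv
    obtain ⟨u, hu⟩ := hv
    have h := hlmin v ⟨u, hu.symm⟩
    rw [hvMm v]
    have h2 := mul_le_mul_of_nonneg_left h hω0.le
    have h3 : (1 + β - ω * lmin) * (v ⬝ᵥ v) ≤ max (1 + β - ω * lmin) 0 * (v ⬝ᵥ v) :=
      mul_le_mul_of_nonneg_right (le_max_left _ _) (SHBaux.dot_self_nonneg v)
    nlinarith
  have hcc0 : 0 ≤ max (1 + β - ω * lmin) 0 := le_max_right _ _
  have hcclt : max (1 + β - ω * lmin) 0 < 2 * Real.sqrt β := by
    have hsβ1 : Real.sqrt β < 1 := by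
      have h := Real.sqrt_lt_sqrt hβpos.le hβhigh
      simpa using h
    have hsqlt : |1 - Real.sqrt (ω * lmin)| < Real.sqrt β := by
      rw [← Real.sqrt_sq_eq_abs]
      exact Real.sqrt_lt_sqrt (sq_nonneg _) hβlow
    have h1 : 1 - Real.sqrt β < Real.sqrt (ω * lmin) := by
      have := (abs_lt.mp hsqlt).2
      linarith
    have h2 : (1 - Real.sqrt β) ^ 2 < ω * lmin := by
      have h0 : 0 ≤ 1 - Real.sqrt β := by linarith
      have h3 : (1 - Real.sqrt β) ^ 2 < (Real.sqrt (ω * lmin)) ^ 2 := by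
        nlinarith [Real.sqrt_nonneg (ω * lmin)]
      rwa [Real.sq_sqrt (by positivity)] at h3
    have hb2 : (Real.sqrt β) ^ 2 = β := Real.sq_sqrt hβpos.le
    apply max_lt
    · nlinarith
    · positivity
  obtain ⟨C, hC, hCk⟩ := SHBaux.seq_decay Mm hMmsym Rg β (max (1 + β - ω * lmin) 0)
    hβpos hcc0 hcclt hQ0 hQc r hmemRg hrrec
  refine ⟨C, hC, fun k => ?_⟩
  have hg : (fun i => ∫ s, (x k s i - xstar i) ∂μ) = r k := rfl
  rw [hg]
  exact hCk k
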